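/- The lower-bounding inequality y ≥ f(x) of the ideal non-extended formulation is facet-defining under strict activity: if M⁻ < 0 < M⁺, then there exist η + 2 affinely independent points (x, y, z) of P each satisfying y = f x. -/

import Mathlib

open Finset

/-- The affine function `f(x) = w · x + b`. -/
noncomputable def fAff {η : ℕ} (w : Fin η → ℝ) (b : ℝ) (x : Fin η → ℝ) : ℝ :=
  (∑ i, w i * x i) + b

/-- The rectified linear unit. -/
noncomputable def ReLU (v : ℝ) : ℝ := max 0 v

/-- The box `[L, U]`. -/
def Box {η : ℕ} (L U : Fin η → ℝ) : Set (Fin η → ℝ) :=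
  {x | ∀ i, L i ≤ x i ∧ x i ≤ U i}

/-- `L̆ i`. -/
noncomputable def Lbreve {η : ℕ} (w L U : Fin η → ℝ) (i : Fin η) : ℝ :=
  if 0 ≤ w i then L i else U i

/-- `Ŭ i`. -/
noncomputable def Ubreve {η : ℕ} (w L U : Fin η → ℝ) (i : Fin η) : ℝ :=
  if 0 ≤ w i then U i else L i

/-- The graph of the ReLU neuron over the box. -/
noncomputable def grSet {η : ℕ} (w : Fin η → ℝ) (b : ℝ) (L U : Fin η → ℝ) :
    Set ((Fin η → ℝ) × ℝ) :=
  {p | ∃ x ∈ Box L U, p = (x, ReLU (fAff w b x))}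

/-- The LP relaxation `P` of the ideal non-extended formulation. A point is
`(x, y, z)` with `x = p.1`, `y = p.2.1`, `z = p.2.2`. -/
noncomputable def Pset {η : ℕ} (w : Fin η → ℝ) (b : ℝ) (L U : Fin η → ℝ) :
    Set ((Fin η → ℝ) × ℝ × ℝ) :=
  {p | p.1 ∈ Box L U ∧ 0 ≤ p.2.1 ∧ 0 ≤ p.2.2 ∧ p.2.2 ≤ 1 ∧ fAff w b p.1 ≤ p.2.1 ∧
    ∀ I : Finset (Fin η), (∀ i ∈ I, w i ≠ 0) →
      p.2.1 ≤ (∑ i ∈ I, w i * (p.1 i - Lbreve w L U i * (1 - p.2.2)))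
        + (b + ∑ i ∈ Iᶜ, w i * Ubreve w L U i) * p.2.2}

/-- The LP relaxation `R` of the big-`M` formulation. -/
noncomputable def Rset {η : ℕ} (w : Fin η → ℝ) (b : ℝ) (L U : Fin η → ℝ) :
    Set ((Fin η → ℝ) × ℝ × ℝ) :=
  {p | p.1 ∈ Box L U ∧ 0 ≤ p.2.1 ∧ 0 ≤ p.2.2 ∧ p.2.2 ≤ 1 ∧ fAff w b p.1 ≤ p.2.1 ∧
    p.2.1 ≤ fAff w b p.1 - ((∑ i, w i * Lbreve w L U i) + b) * (1 - p.2.2) ∧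
    p.2.1 ≤ ((∑ i, w i * Ubreve w L U i) + b) * p.2.2}

/-- The LP relaxation `Q` of the multiple-choice extended formulation. A point is
`(x, y, z, x⁰, x¹, y⁰, y¹)`. -/
noncomputable def Qset {η : ℕ} (w : Fin η → ℝ) (b : ℝ) (L U : Fin η → ℝ) :
    Set ((Fin η → ℝ) × ℝ × ℝ × (Fin η → ℝ) × (Fin η → ℝ) × ℝ × ℝ) :=
  {q | match q with
    | (x, y, z, x0, x1, y0, y1) =>
      x = x0 + x1 ∧ y = y0 + y1 ∧ y0 = 0 ∧
      (∑ i, w i * x0 i) + b * (1 - z) ≤ 0 ∧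
      y1 = (∑ i, w i * x1 i) + b * z ∧ 0 ≤ y1 ∧
      (∀ i, L i * (1 - z) ≤ x0 i ∧ x0 i ≤ U i * (1 - z)) ∧
      (∀ i, L i * z ≤ x1 i ∧ x1 i ≤ U i * z) ∧
      0 ≤ z ∧ z ≤ 1}

section Aux

variable {η : ℕ} (w : Fin η → ℝ) (b : ℝ) (L U : Fin η → ℝ)

lemma box_combo (hLU : ∀ i, L i < U i) {t : ℝ} (ht0 : 0 ≤ t) (ht1 : t ≤ 1) (i : Fin η) :
    L i ≤ Ubreve w L U i + t * (Lbreve w L U i - Ubreve w L U i) ∧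
      Ubreve w L U i + t * (Lbreve w L U i - Ubreve w L U i) ≤ U i := by
  have := hLU i
  by_cases hw : 0 ≤ w i
  · simp only [Ubreve, Lbreve, if_pos hw]
    constructor <;> nlinarith
  · simp only [Ubreve, Lbreve, if_neg hw]
    constructor <;> nlinarith

lemma mem_top_aux (x : Fin η → ℝ) (hbx : x ∈ Box L U)
    (hxw : ∀ i, w i * x i ≤ w i * Ubreve w L U i) (hy : 0 ≤ fAff w b x) :
    (x, fAff w b x, (1 : ℝ)) ∈ Pset w b L U := by
  refine ⟨hbx, hy, zero_le_one, le_refl _, le_refl _, fun I _ => ?_⟩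
  have hcast : ∑ i ∈ I, w i * (x i - Lbreve w L U i * (1 - 1)) = ∑ i ∈ I, w i * x i :=
    Finset.sum_congr rfl fun i _ => by ring
  rw [hcast, mul_one]
  have hsplit := Finset.sum_add_sum_compl I (fun i => w i * x i)
  have hle : ∑ i ∈ Iᶜ, w i * x i ≤ ∑ i ∈ Iᶜ, w i * Ubreve w L U i :=
    Finset.sum_le_sum fun i _ => hxw i
  simp only [fAff]
  linarith

lemma mem_lam_aux (lam : ℝ) (x : Fin η → ℝ) (hbx : x ∈ Box L U)
    (hlam0 : 0 ≤ lam) (hlam1 : lam ≤ 1) (hf : fAff w b x ≤ 0)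
    (hxeq : ∀ i, x i - Lbreve w L U i * (1 - lam) = lam * Ubreve w L U i)
    (hApos : 0 ≤ (∑ i, w i * Ubreve w L U i) + b) :
    (x, (0 : ℝ), lam) ∈ Pset w b L U := by
  refine ⟨hbx, le_refl _, hlam0, hlam1, hf, fun I _ => ?_⟩
  have h1 : ∑ i ∈ I, w i * (x i - Lbreve w L U i * (1 - lam))
      = lam * ∑ i ∈ I, w i * Ubreve w L U i := by
    rw [Finset.mul_sum]; exact Finset.sum_congr rfl fun i _ => by rw [hxeq i]; ring
  have h2 := Finset.sum_add_sum_compl I (fun i => w i * Ubreve w L U i)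
  have h3 : lam * (∑ i ∈ I, w i * Ubreve w L U i)
      + (b + ∑ i ∈ Iᶜ, w i * Ubreve w L U i) * lam
      = lam * ((∑ i, w i * Ubreve w L U i) + b) := by
    linear_combination lam * h2
  rw [h1, h3]
  exact mul_nonneg hlam0 hApos

end Aux

/-- The lower-bounding inequality `y ≥ f(x)` is facet-defining under strict
activity. -/
theorem lower_bounding_facet_defining {η : ℕ} (w : Fin η → ℝ) (b : ℝ)
    (L U : Fin η → ℝ) (hLU : ∀ i, L i < U i)
    (hMneg : (∑ i, w i * Lbreve w L U i) + b < 0)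
    (hMpos : 0 < (∑ i, w i * Ubreve w L U i) + b) :
    ∃ p : Fin (η + 2) → (Fin η → ℝ) × ℝ × ℝ,
      AffineIndependent ℝ p ∧
      ∀ k, p k ∈ Pset w b L U ∧ (p k).2.1 = fAff w b ((p k).1) := by
  classical
  set A := (∑ i, w i * Ubreve w L U i) + b with hAdef
  set B := (∑ i, w i * Lbreve w L U i) + b with hBdef
  have hD : (0 : ℝ) < A - B := by linarith
  have hterm : ∀ i, 0 ≤ w i * (Ubreve w L U i - Lbreve w L U i) := by
    intro i
    by_cases hw : 0 ≤ w i
    · simp only [Ubreve, Lbreve, if_pos hw]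
      nlinarith [(hLU i).le]
    · simp only [Ubreve, Lbreve, if_neg hw]
      nlinarith [(hLU i).le]
  have hne : ∀ i, Lbreve w L U i - Ubreve w L U i ≠ 0 := by
    intro i
    by_cases hw : 0 ≤ w i
    · simp only [Ubreve, Lbreve, if_pos hw]
      have := hLU i; intro hc; linarith [sub_eq_zero.mp hc]
    · simp only [Ubreve, Lbreve, if_neg hw]
      have := hLU i; intro hc; linarith [sub_eq_zero.mp hc]
  have hsum : ∑ i, w i * (Ubreve w L U i - Lbreve w L U i) = A - B := by
    simp only [mul_sub]
    rw [Finset.sum_sub_distrib, hAdef, hBdef]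
    ring
  have hsingle : ∀ i, w i * (Ubreve w L U i - Lbreve w L U i) ≤ A - B := fun i =>
    hsum ▸ Finset.single_le_sum (fun j _ => hterm j) (Finset.mem_univ i)
  set lam := -B / (A - B) with hlamdef
  have hlam0 : 0 < lam := div_pos (by linarith) hD
  have hlam1 : lam < 1 := by rw [hlamdef, div_lt_one hD]; linarith
  set eps := 1 - lam with hepsdef
  have heps0 : 0 < eps := by simp only [hepsdef]; linarith
  have heps1 : eps ≤ 1 := by simp only [hepsdef]; linarith
  have hepsA : eps * (A - B) = A := by
    rw [hepsdef, hlamdef]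
    field_simp
    ring
  set xq : Fin (η + 1) → Fin η → ℝ := fun k i =>
    Ubreve w L U i + (if (k : ℕ) = (i : ℕ) + 1 then
      eps * (Lbreve w L U i - Ubreve w L U i) else 0) with hxqdef
  set xl : Fin η → ℝ := fun i =>
    Ubreve w L U i + eps * (Lbreve w L U i - Ubreve w L U i) with hxldef
  set p : Fin (η + 2) → (Fin η → ℝ) × ℝ × ℝ := fun k =>
    if h : (k : ℕ) < η + 1 then (xq ⟨(k : ℕ), h⟩, fAff w b (xq ⟨(k : ℕ), h⟩), 1)
    else (xl, 0, lam) with hpdef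
  have hpc : ∀ j : Fin (η + 1), p j.castSucc = (xq j, fAff w b (xq j), 1) := by
    intro j
    have h : ((j.castSucc : Fin (η + 2)) : ℕ) < η + 1 := by
      simp [Fin.coe_castSucc, j.isLt]
    have e : (⟨((j.castSucc : Fin (η + 2)) : ℕ), h⟩ : Fin (η + 1)) = j :=
      Fin.ext (Fin.coe_castSucc j)
    simp only [hpdef, dif_pos h, e]
  have hpl : p (Fin.last (η + 1)) = (xl, 0, lam) := by
    simp only [hpdef]
    rw [dif_neg]
    simp [Fin.last]
  -- value of fAff on xq
  have hfq : ∀ j : Fin (η + 1), fAff w b (xq j)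
      = A + ∑ i : Fin η, (if (j : ℕ) = (i : ℕ) + 1 then
          w i * (eps * (Lbreve w L U i - Ubreve w L U i)) else 0) := by
    intro j
    simp only [fAff, hxqdef, mul_add, Finset.sum_add_distrib, mul_ite, mul_zero, hAdef]
    ring
  have hdirac0 : ∀ g : Fin η → ℝ,
      ∑ i : Fin η, (if (((0 : Fin (η + 1))) : ℕ) = (i : ℕ) + 1 then g i else 0) = 0 :=
    fun g => Finset.sum_eq_zero fun i _ => if_neg (by simp)
  have hdiracS : ∀ (m : Fin η) (g : Fin η → ℝ),
      ∑ i : Fin η, (if ((m.succ : Fin (η + 1)) : ℕ) = (i : ℕ) + 1 then g i else 0) = g m := by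
    intro m g
    have hcongr : ∀ i ∈ (Finset.univ : Finset (Fin η)),
        (if ((m.succ : Fin (η + 1)) : ℕ) = (i : ℕ) + 1
        then g i else 0) = (if i = m then g i else 0) := by
      intro i _
      by_cases h : i = m
      · subst h; simp [Fin.val_succ]
      · rw [if_neg ?_, if_neg h]
        intro hc
        refine h (Fin.ext ?_)
        simp only [Fin.val_succ] at hc
        omega
    rw [Finset.sum_congr rfl hcongr, Finset.sum_ite_eq' Finset.univ m g]
    simp
  have hfq0 : fAff w b (xq 0) = A := by rw [hfq 0, hdirac0]; ring
  have hfqS : ∀ m : Fin η, fAff w b (xq m.succ)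
      = A + w m * (eps * (Lbreve w L U m - Ubreve w L U m)) := by
    intro m; rw [hfq m.succ, hdiracS]
  have hfq_nonneg : ∀ j : Fin (η + 1), 0 ≤ fAff w b (xq j) := by
    intro j
    refine Fin.cases ?_ ?_ j
    · rw [hfq0]; linarith
    · intro m
      rw [hfqS m]
      have h1 : eps * (w m * (Ubreve w L U m - Lbreve w L U m)) ≤ eps * (A - B) :=
        mul_le_mul_of_nonneg_left (hsingle m) heps0.le
      nlinarith [hepsA]
  have hxw : ∀ (j : Fin (η + 1)) i, w i * xq j i ≤ w i * Ubreve w L U i := by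
    intro j i
    simp only [hxqdef]
    by_cases hc : (j : ℕ) = (i : ℕ) + 1
    · rw [if_pos hc]
      nlinarith [mul_nonneg heps0.le (hterm i)]
    · rw [if_neg hc]; simp
  have hbxq : ∀ j : Fin (η + 1), xq j ∈ Box L U := by
    intro j i
    simp only [hxqdef]
    by_cases hc : (j : ℕ) = (i : ℕ) + 1
    · rw [if_pos hc]; exact box_combo w L U hLU heps0.le heps1 i
    · rw [if_neg hc]
      simpa using box_combo w L U hLU (le_refl (0:ℝ)) zero_le_one i
  have hbxl : xl ∈ Box L U := fun i => box_combo w L U hLU heps0.le heps1 i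
  have hflast : fAff w b xl = 0 := by
    have h1 : ∑ i, w i * (eps * (Lbreve w L U i - Ubreve w L U i)) = -(eps * (A - B)) := by
      rw [← hsum, Finset.mul_sum, ← Finset.sum_neg_distrib]
      exact Finset.sum_congr rfl fun i _ => by ring
    simp only [fAff, hxldef, mul_add, Finset.sum_add_distrib, h1, hepsA]
    rw [hAdef]; ring
  have hxeq : ∀ i, xl i - Lbreve w L U i * (1 - lam) = lam * Ubreve w L U i := by
    intro i
    simp only [hxldef, hepsdef]
    ring
  refine ⟨p, ?_, ?_⟩
  · -- affine independence
    rw [affineIndependent_iff]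
    intro s c hs0 hs1 e he
    set d : Fin (η + 2) → ℝ := fun k => if k ∈ s then c k else 0 with hddef
    have hd0 : ∑ k, d k = 0 := by
      simp only [hddef]
      rw [Finset.sum_ite_mem, Finset.univ_inter]
      exact hs0
    have hd1 : ∑ k, d k • p k = 0 := by
      simp only [hddef, ite_smul, zero_smul]
      rw [Finset.sum_ite_mem, Finset.univ_inter]
      exact hs1
    have hz : ∑ k, d k * (p k).2.2 = 0 := by
      have := congrArg (fun v => v.2.2) hd1
      simpa [Prod.snd_sum, Prod.fst_sum] using this
    have hx : ∀ i, ∑ k, d k * (p k).1 i = 0 := by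
      intro i
      have := congrArg (fun v => v.1 i) hd1
      simpa [Prod.fst_sum, Finset.sum_apply] using this
    rw [Fin.sum_univ_castSucc] at hd0 hz
    simp only [hpc, hpl, mul_one] at hz
    have hdlast : d (Fin.last (η + 1)) = 0 := by
      have h2 : d (Fin.last (η + 1)) * (1 - lam) = 0 := by linear_combination hd0 - hz
      exact (mul_eq_zero.1 h2).resolve_right (by intro hc; exact absurd hc (by
        simp only [hepsdef] at heps0; intro h; linarith [sub_eq_zero.mp h]))
    have hdsum : ∑ j : Fin (η + 1), d j.castSucc = 0 := by
      rw [hdlast] at hd0; linarith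
    have hdsucc : ∀ m : Fin η, d ((m.succ : Fin (η + 1)).castSucc) = 0 := by
      intro m
      have h := hx m
      rw [Fin.sum_univ_castSucc] at h
      simp only [hpc, hpl, hdlast, zero_mul, add_zero] at h
      have h2 : ∑ j : Fin (η + 1), d j.castSucc * xq j m
          = (∑ j : Fin (η + 1), d j.castSucc) * Ubreve w L U m
            + d ((m.succ : Fin (η + 1)).castSucc)
              * (eps * (Lbreve w L U m - Ubreve w L U m)) := by
        simp only [hxqdef, mul_add, Finset.sum_add_distrib, ← Finset.sum_mul, mul_ite, mul_zero]
        congr 1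
        have hcongr : ∀ j ∈ Finset.univ, (if (j : Fin (η+1)).1 = (m : ℕ) + 1 then
            d (Fin.castSucc j) * (eps * (Lbreve w L U m - Ubreve w L U m)) else 0)
            = (if j = m.succ then
            d (Fin.castSucc j) * (eps * (Lbreve w L U m - Ubreve w L U m)) else 0) := by
          intro j _
          by_cases hj : j = m.succ
          · subst hj; simp [Fin.val_succ]
          · rw [if_neg ?_, if_neg hj]
            intro hc
            exact hj (Fin.ext (by simpa [Fin.val_succ] using hc))
        rw [Finset.sum_congr rfl hcongr, Finset.sum_ite_eq' Finset.univ m.succ]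
        simp
      rw [h2, hdsum, zero_mul, zero_add] at h
      have hfac : eps * (Lbreve w L U m - Ubreve w L U m) ≠ 0 :=
        mul_ne_zero (ne_of_gt heps0) (hne m)
      exact (mul_eq_zero.1 h).resolve_right hfac
    have hd00 : d ((0 : Fin (η + 1)).castSucc) = 0 := by
      have h0 : ∑ m : Fin η, d ((Fin.succ m).castSucc) = 0 :=
        Finset.sum_eq_zero fun m _ => hdsucc m
      rw [Fin.sum_univ_succ, h0] at hdsum
      linarith
    have hall : ∀ k, d k = 0 := by
      intro k
      refine Fin.lastCases hdlast (fun j => ?_) k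
      exact Fin.cases hd00 (fun m => hdsucc m) j
    have := hall e
    simp only [hddef, if_pos he] at this
    exact this
  · -- membership and tightness
    intro k
    refine Fin.lastCases ?_ (fun j => ?_) k
    · rw [hpl]
      refine ⟨mem_lam_aux w b L U lam xl hbxl hlam0.le hlam1.le hflast.le hxeq
        (by rw [← hAdef]; linarith), ?_⟩
      simpa using hflast.symm
    · rw [hpc j]
      exact ⟨mem_top_aux w b L U (xq j) (hbxq j) (hxw j) (hfq_nonneg j), rfl⟩
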